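/- arXiv:2201.06931 — 2 statements merged into one kernel-verified Lean document; each statement's English description precedes it below -/
import Mathlib

section
/- Let n, N be positive integers, Φ a real n×N matrix such that ΦΦᵀ is invertible, and P := Φᵀ(ΦΦᵀ)⁻¹Φ the associated N×N matrix. Let ε > 0, let 𝒟 : ℝ^N → ℝ^N be a map such that x ↦ 𝒟(x) − x is ε-Lipschitz, fix y ∈ ℝ^n, and define the DE-GAP iteration map f(x) := 𝒟(x + Φᵀ(ΦΦᵀ)⁻¹(y − Φx)). Then for all x, x' ∈ ℝ^N, ‖f(x) − f(x')‖ ≤ η·‖x − x'‖, where η = (1 + ε)·max_i |1 − λ_i| and λ₁, …, λ_N are the eigenvalues of the symmetric matrix P. (Convergence of DE-GAP, Theorem 2.) -/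
open Matrix

lemma toEuclideanLin_mul_apply {m n p : ℕ} (M : Matrix (Fin m) (Fin n) ℝ)
    (K : Matrix (Fin n) (Fin p) ℝ) (v : EuclideanSpace ℝ (Fin p)) :
    Matrix.toEuclideanLin (M * K) v = Matrix.toEuclideanLin M (Matrix.toEuclideanLin K v) := by
  simp [Matrix.toEuclideanLin_apply, Matrix.mulVec_mulVec]

lemma herm_one_sub_bound {N : ℕ} (hN : 0 < N) (P : Matrix (Fin N) (Fin N) ℝ)
    (hP : P.IsHermitian) (v : EuclideanSpace ℝ (Fin N)) :
    ‖v - Matrix.toEuclideanLin P v‖ ≤ (⨆ i : Fin N, |1 - hP.eigenvalues i|) * ‖v‖ := by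
  set S := ⨆ i : Fin N, |1 - hP.eigenvalues i| with hS
  have hS_le : ∀ i, |1 - hP.eigenvalues i| ≤ S :=
    fun i => le_ciSup (f := fun i => |1 - hP.eigenvalues i|) (Set.Finite.bddAbove (Set.finite_range _)) i
  have hS0 : 0 ≤ S := le_trans (abs_nonneg _) (hS_le ⟨0, hN⟩)
  set T : EuclideanSpace ℝ (Fin N) →ₗ[ℝ] EuclideanSpace ℝ (Fin N) :=
    LinearMap.id - Matrix.toEuclideanLin P with hT
  have hsymm : (Matrix.toEuclideanLin P).IsSymmetric :=
    Matrix.isHermitian_iff_isSymmetric.mp hP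
  have hTsymm : T.IsSymmetric := by
    intro a b
    simp only [hT, LinearMap.sub_apply, LinearMap.id_apply, inner_sub_left, inner_sub_right,
      hsymm a b]
  set b := hP.eigenvectorBasis with hb
  have hTb : ∀ i, T (b i) = (1 - hP.eigenvalues i) • b i := by
    intro i
    have h1 : Matrix.toEuclideanLin P (b i) = hP.eigenvalues i • b i := by
      have h2 := hP.mulVec_eigenvectorBasis i
      apply (WithLp.equiv 2 (Fin N → ℝ)).injective
      funext j
      have := congrFun h2 j
      simpa [Matrix.toEuclideanLin_apply] using this
    simp only [hT, LinearMap.sub_apply, LinearMap.id_apply, h1, sub_smul, one_smul]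
  -- Parseval-based bound
  have hinner : ∀ i, (inner ℝ (b i) (T v) : ℝ) = (1 - hP.eigenvalues i) * inner ℝ (b i) v := by
    intro i
    rw [← hTsymm (b i) v, hTb i, real_inner_smul_left]
  have hnormT : ‖T v‖ ^ 2 = ∑ i, ((1 - hP.eigenvalues i) * inner ℝ (b i) v) ^ 2 := by
    rw [← real_inner_self_eq_norm_sq, ← b.sum_inner_mul_inner (T v) (T v)]
    refine Finset.sum_congr rfl fun i _ => ?_
    rw [real_inner_comm (b i) (T v), hinner i]; ring
  have hnormv : ‖v‖ ^ 2 = ∑ i, (inner ℝ (b i) v : ℝ) ^ 2 := by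
    rw [← real_inner_self_eq_norm_sq, ← b.sum_inner_mul_inner v v]
    refine Finset.sum_congr rfl fun i _ => ?_
    rw [real_inner_comm (b i) v]; ring
  have hsq : ‖T v‖ ^ 2 ≤ (S * ‖v‖) ^ 2 := by
    rw [hnormT, mul_pow, hnormv, Finset.mul_sum]
    apply Finset.sum_le_sum
    intro i _
    rw [mul_pow]
    apply mul_le_mul_of_nonneg_right _ (sq_nonneg _)
    calc (1 - hP.eigenvalues i) ^ 2 = |1 - hP.eigenvalues i| ^ 2 := (sq_abs _).symm
      _ ≤ S ^ 2 := by
          apply pow_le_pow_left₀ (abs_nonneg _) (hS_le i)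
  have hfin : ‖T v‖ ≤ S * ‖v‖ := by
    have h := Real.sqrt_le_sqrt hsq
    rwa [Real.sqrt_sq (norm_nonneg _), Real.sqrt_sq (mul_nonneg hS0 (norm_nonneg _))] at h
  simpa [hT] using hfin

/-- **Convergence of DE-GAP (Theorem 2).**
Let `Φ` be a real `n × N` matrix with `ΦΦᵀ` invertible, `P = Φᵀ(ΦΦᵀ)⁻¹Φ` (a symmetric
matrix with real eigenvalues `λᵢ`), let `𝒟 − I` be `ε`-Lipschitz, and let
`f(x) = 𝒟(x + Φᵀ(ΦΦᵀ)⁻¹(y − Φx))` be the DE-GAP iteration map.  Then `f` is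
`η`-Lipschitz with `η = (1 + ε)·maxᵢ|1 − λᵢ|`. -/
theorem stmt_1 (n N : ℕ) (hn : 0 < n) (hN : 0 < N)
    (Φ : Matrix (Fin n) (Fin N) ℝ) (hΦ : IsUnit (Φ * Φᵀ))
    (P : Matrix (Fin N) (Fin N) ℝ) (hPdef : P = Φᵀ * (Φ * Φᵀ)⁻¹ * Φ)
    (hP : P.IsHermitian)
    (ε : ℝ) (hε : 0 < ε)
    (D : EuclideanSpace ℝ (Fin N) → EuclideanSpace ℝ (Fin N))
    (hD : ∀ x x' : EuclideanSpace ℝ (Fin N), ‖(D x - x) - (D x' - x')‖ ≤ ε * ‖x - x'‖)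
    (y : EuclideanSpace ℝ (Fin n))
    (f : EuclideanSpace ℝ (Fin N) → EuclideanSpace ℝ (Fin N))
    (hf : ∀ x : EuclideanSpace ℝ (Fin N),
      f x = D (x + Matrix.toEuclideanLin (Φᵀ * (Φ * Φᵀ)⁻¹) (y - Matrix.toEuclideanLin Φ x))) :
    ∀ x x' : EuclideanSpace ℝ (Fin N),
      ‖f x - f x'‖ ≤ ((1 + ε) * ⨆ i : Fin N, |1 - hP.eigenvalues i|) * ‖x - x'‖ := by
  intro x x'
  set S := ⨆ i : Fin N, |1 - hP.eigenvalues i| with hS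
  set g : EuclideanSpace ℝ (Fin N) → EuclideanSpace ℝ (Fin N) :=
    fun z => z + Matrix.toEuclideanLin (Φᵀ * (Φ * Φᵀ)⁻¹) (y - Matrix.toEuclideanLin Φ z) with hg
  have hgd : g x - g x' = (x - x') - Matrix.toEuclideanLin P (x - x') := by
    have hmul : Matrix.toEuclideanLin P (x - x') =
        Matrix.toEuclideanLin (Φᵀ * (Φ * Φᵀ)⁻¹) (Matrix.toEuclideanLin Φ (x - x')) := by
      rw [hPdef]
      exact toEuclideanLin_mul_apply _ _ _
    simp only [hg, hmul, map_sub]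
    abel
  have hkey : ‖g x - g x'‖ ≤ S * ‖x - x'‖ := by
    rw [hgd]
    exact herm_one_sub_bound hN P hP (x - x')
  have hsplit : f x - f x' = ((D (g x) - g x) - (D (g x') - g x')) + (g x - g x') := by
    rw [hf x, hf x']
    show D (g x) - D (g x') = _
    abel
  calc ‖f x - f x'‖ = ‖((D (g x) - g x) - (D (g x') - g x')) + (g x - g x')‖ := by rw [hsplit]
    _ ≤ ‖(D (g x) - g x) - (D (g x') - g x')‖ + ‖g x - g x'‖ := norm_add_le _ _
    _ ≤ ε * ‖g x - g x'‖ + ‖g x - g x'‖ := by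
        exact add_le_add (hD (g x) (g x')) le_rfl
    _ = (1 + ε) * ‖g x - g x'‖ := by ring
    _ ≤ (1 + ε) * (S * ‖x - x'‖) := by
        apply mul_le_mul_of_nonneg_left hkey (by linarith)
    _ = ((1 + ε) * S) * ‖x - x'‖ := by ring
end

section
/- Let n, N be positive integers, Φ a real n×N matrix such that ΦΦᵀ is invertible, P := Φᵀ(ΦΦᵀ)⁻¹Φ with (real) eigenvalues λ₁, …, λ_N, and y ∈ ℝ^n. Let ε > 0 and let 𝒟 : ℝ^N → ℝ^N be differentiable with ‖𝒟'(u) − I‖ ≤ ε (operator norm) for all u ∈ ℝ^N. Then the DE-GAP iteration map f(x) := 𝒟(x + Φᵀ(ΦΦᵀ)⁻¹(y − Φx)) satisfies ‖f'(x)‖ ≤ (1 + ε)·max_i |1 − λ_i| for every x ∈ ℝ^N. -/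
open Matrix

private lemma aux_hermitian_norm_bound (N : ℕ) (hN : 0 < N)
    (P : Matrix (Fin N) (Fin N) ℝ) (hP : P.IsHermitian)
    (v : EuclideanSpace ℝ (Fin N)) :
    ‖v - Matrix.toEuclideanLin P v‖ ≤ (⨆ i : Fin N, |1 - hP.eigenvalues i|) * ‖v‖ := by
  have hNe : Nonempty (Fin N) := ⟨⟨0, hN⟩⟩
  set M := ⨆ i : Fin N, |1 - hP.eigenvalues i| with hMdef
  have hbdd : BddAbove (Set.range fun i : Fin N => |1 - hP.eigenvalues i|) :=
    (Set.finite_range _).bddAbove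
  have hle : ∀ i, |1 - hP.eigenvalues i| ≤ M := fun i => le_ciSup hbdd i
  have hM0 : 0 ≤ M := le_trans (abs_nonneg _) (hle ⟨0, hN⟩)
  set b := hP.eigenvectorBasis with hb
  set w := v - Matrix.toEuclideanLin P v with hw
  have hsym : (Matrix.toEuclideanLin P).IsSymmetric :=
    Matrix.isHermitian_iff_isSymmetric.mp hP
  have hTb : ∀ i, Matrix.toEuclideanLin P (b i) = hP.eigenvalues i • b i := fun i => by
    ext j; simpa using congrFun (hP.mulVec_eigenvectorBasis i) j
  have hrepr : ∀ i, b.repr w i = (1 - hP.eigenvalues i) * b.repr v i := by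
    intro i
    have h1 : b.repr w i = inner ℝ (b i) w := b.repr_apply_apply w i
    have h2 : b.repr v i = inner ℝ (b i) v := b.repr_apply_apply v i
    have h3 : (inner ℝ (b i) (Matrix.toEuclideanLin P v) : ℝ)
        = hP.eigenvalues i * inner ℝ (b i) v := by
      rw [← hsym (b i) v, hTb i, real_inner_smul_left]
    rw [h1, h2, hw, inner_sub_right, h3]; ring
  have h4 : ‖b.repr w‖ ≤ M * ‖b.repr v‖ := by
    rw [EuclideanSpace.norm_eq, EuclideanSpace.norm_eq,
      ← Real.sqrt_sq hM0, ← Real.sqrt_mul (sq_nonneg M)]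
    apply Real.sqrt_le_sqrt
    rw [Finset.mul_sum]
    apply Finset.sum_le_sum
    intro i _
    rw [hrepr i]
    have hstep : ‖(1 - hP.eigenvalues i) * b.repr v i‖ ≤ M * ‖b.repr v i‖ := by
      rw [norm_mul]
      exact mul_le_mul_of_nonneg_right (by simpa using hle i) (norm_nonneg _)
    calc ‖(1 - hP.eigenvalues i) * b.repr v i‖ ^ 2 ≤ (M * ‖b.repr v i‖) ^ 2 :=
          pow_le_pow_left₀ (norm_nonneg _) hstep 2
      _ = M ^ 2 * ‖b.repr v i‖ ^ 2 := by ring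
  calc ‖w‖ = ‖b.repr w‖ := (b.repr.norm_map w).symm
    _ ≤ M * ‖b.repr v‖ := h4
    _ = M * ‖v‖ := by rw [b.repr.norm_map]

/-- **Jacobian bound for DE-GAP (proof of Theorem 2).**
If `𝒟` is differentiable with `‖𝒟'(u) − I‖ ≤ ε` for all `u`, then the DE-GAP iteration
map `f(x) = 𝒟(x + Φᵀ(ΦΦᵀ)⁻¹(y − Φx))` satisfies
`‖f'(x)‖ ≤ (1 + ε)·maxᵢ|1 − λᵢ|` for every `x`, where `λᵢ` are the eigenvalues of
`P = Φᵀ(ΦΦᵀ)⁻¹Φ`. -/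
theorem stmt_14 (n N : ℕ) (hn : 0 < n) (hN : 0 < N)
    (Φ : Matrix (Fin n) (Fin N) ℝ) (hΦ : IsUnit (Φ * Φᵀ))
    (P : Matrix (Fin N) (Fin N) ℝ) (hPdef : P = Φᵀ * (Φ * Φᵀ)⁻¹ * Φ)
    (hP : P.IsHermitian)
    (y : EuclideanSpace ℝ (Fin n))
    (ε : ℝ) (hε : 0 < ε)
    (D : EuclideanSpace ℝ (Fin N) → EuclideanSpace ℝ (Fin N))
    (hD : Differentiable ℝ D)
    (hD' : ∀ u : EuclideanSpace ℝ (Fin N),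
      ‖fderiv ℝ D u - (1 : EuclideanSpace ℝ (Fin N) →L[ℝ] EuclideanSpace ℝ (Fin N))‖ ≤ ε)
    (f : EuclideanSpace ℝ (Fin N) → EuclideanSpace ℝ (Fin N))
    (hf : ∀ x : EuclideanSpace ℝ (Fin N),
      f x = D (x + Matrix.toEuclideanLin (Φᵀ * (Φ * Φᵀ)⁻¹) (y - Matrix.toEuclideanLin Φ x))) :
    ∀ x : EuclideanSpace ℝ (Fin N),
      ‖fderiv ℝ f x‖ ≤ (1 + ε) * ⨆ i : Fin N, |1 - hP.eigenvalues i| := by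
  intro x
  have hNe : Nonempty (Fin N) := ⟨⟨0, hN⟩⟩
  set M := ⨆ i : Fin N, |1 - hP.eigenvalues i| with hMdef
  have hM0 : 0 ≤ M := le_trans (abs_nonneg _)
    (le_ciSup (f := fun i : Fin N => |1 - hP.eigenvalues i|)
      ((Set.finite_range _).bddAbove) ⟨0, hN⟩)
  set A_L : EuclideanSpace ℝ (Fin n) →L[ℝ] EuclideanSpace ℝ (Fin N) :=
    LinearMap.toContinuousLinearMap (Matrix.toEuclideanLin (Φᵀ * (Φ * Φᵀ)⁻¹)) with hA_L
  set Φ_L : EuclideanSpace ℝ (Fin N) →L[ℝ] EuclideanSpace ℝ (Fin n) :=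
    LinearMap.toContinuousLinearMap (Matrix.toEuclideanLin Φ) with hΦ_L
  set L := ContinuousLinearMap.id ℝ (EuclideanSpace ℝ (Fin N)) - A_L.comp Φ_L with hL
  set g : EuclideanSpace ℝ (Fin N) → EuclideanSpace ℝ (Fin N) :=
    fun z => z + Matrix.toEuclideanLin (Φᵀ * (Φ * Φᵀ)⁻¹) (y - Matrix.toEuclideanLin Φ z) with hg
  have hgL : HasFDerivAt g L x := by
    have hgeq : g = fun z => A_L y + L z := by
      funext z
      show z + Matrix.toEuclideanLin (Φᵀ * (Φ * Φᵀ)⁻¹) (y - Matrix.toEuclideanLin Φ z)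
        = A_L y + L z
      have h1 : Matrix.toEuclideanLin (Φᵀ * (Φ * Φᵀ)⁻¹) (y - Matrix.toEuclideanLin Φ z)
          = A_L (y - Φ_L z) := rfl
      have h2 : L z = z - A_L (Φ_L z) := rfl
      rw [h1, h2, map_sub]
      abel
    rw [hgeq]
    exact (L.hasFDerivAt).const_add (A_L y)
  have hfg : f = fun z => D (g z) := funext hf
  have hDf : HasFDerivAt f ((fderiv ℝ D (g x)).comp L) x := by
    rw [hfg]
    exact ((hD (g x)).hasFDerivAt).comp x hgL
  rw [hDf.fderiv]
  have hDn : ‖fderiv ℝ D (g x)‖ ≤ 1 + ε := by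
    calc ‖fderiv ℝ D (g x)‖
        = ‖(fderiv ℝ D (g x) - 1) + 1‖ := by rw [sub_add_cancel]
      _ ≤ ‖fderiv ℝ D (g x) - 1‖
            + ‖(1 : EuclideanSpace ℝ (Fin N) →L[ℝ] EuclideanSpace ℝ (Fin N))‖ :=
          norm_add_le _ _
      _ ≤ ε + 1 := add_le_add (hD' (g x)) ContinuousLinearMap.norm_id_le
      _ = 1 + ε := add_comm _ _
  have hLn : ‖L‖ ≤ M := by
    apply ContinuousLinearMap.opNorm_le_bound _ hM0
    intro v
    have hLv : L v = v - Matrix.toEuclideanLin P v := by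
      have h1 : L v = v - A_L (Φ_L v) := rfl
      rw [h1]
      congr 1
      show Matrix.toEuclideanLin (Φᵀ * (Φ * Φᵀ)⁻¹) (Matrix.toEuclideanLin Φ v)
          = Matrix.toEuclideanLin P v
      rw [hPdef]
      simp [toEuclideanLin_apply, mulVec_mulVec, Matrix.mul_assoc]
    rw [hLv]
    exact aux_hermitian_norm_bound N hN P hP v
  calc ‖(fderiv ℝ D (g x)).comp L‖
      ≤ ‖fderiv ℝ D (g x)‖ * ‖L‖ := ContinuousLinearMap.opNorm_comp_le _ _
    _ ≤ (1 + ε) * M := mul_le_mul hDn hLn (norm_nonneg _) (by positivity)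
end
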